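/- Let V be a complex vector space, let r ≥ 1 be an integer, let ε be a primitive r-th root of unity, let a_1, …, a_k be distinct nonzero complex numbers, and let λ_1, …, λ_k be nonzero vectors in V. Assume that Σ_{i=1}^{k} a_i^n · λ_i = 0 for every integer n that is not divisible by r. Then there exists a permutation π of {1, …, k} such that a_{π(i)} = ε · a_i and λ_{π(i)} = λ_i for all i. -/

import Mathlib

open Finset

/-- Scalar key lemma: distinct nonzero complex exponentials are linearly
independent. -/
lemma scalar_exp_indep (s : Finset ℂ) (hs : ∀ b ∈ s, b ≠ 0) (c : ℂ → ℂ)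
    (h : ∀ n : ℤ, ∑ b ∈ s, c b * b ^ n = 0) : ∀ b ∈ s, c b = 0 := by
  classical
  set χ : s → (Multiplicative ℤ →* ℂ) :=
    fun b => (Units.coeHom ℂ).comp (zpowersHom ℂˣ (Units.mk0 (b : ℂ) (hs b b.2)))
  have hχ : Function.Injective χ := by
    intro b b' hbb
    have := DFunLike.congr_fun hbb (Multiplicative.ofAdd 1)
    simp [χ, zpowersHom_apply] at this
    exact this
  have hli : LinearIndependent ℂ (fun b : s => ⇑(χ b)) :=
    (linearIndependent_monoidHom (Multiplicative ℤ) ℂ).comp χ hχ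
  have hz : ∀ b : s, c b = 0 := by
    rw [Fintype.linearIndependent_iff] at hli
    apply hli (fun b => c b)
    funext m
    have := h (Multiplicative.toAdd m)
    simpa [χ, zpowersHom_apply, ← Finset.sum_attach s (fun b => c b * b ^ Multiplicative.toAdd m)]
      using this
  intro b hb
  exact hz ⟨b, hb⟩

lemma vector_exp_indep (V : Type*) [AddCommGroup V] [Module ℂ V]
    (s : Finset ℂ) (hs : ∀ b ∈ s, b ≠ 0) (F : ℂ → V)
    (h : ∀ n : ℤ, ∑ b ∈ s, b ^ n • F b = 0) : ∀ b ∈ s, F b = 0 := by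
  intro b hb
  rw [← Module.forall_dual_apply_eq_zero_iff ℂ]
  intro φ
  refine scalar_exp_indep s hs (fun b => φ (F b)) (fun n => ?_) b hb
  have := congrArg φ (h n)
  simpa [mul_comm] using this

theorem exponential_sum_root_of_unity_symmetry
    (V : Type*) [AddCommGroup V] [Module ℂ V]
    (r : ℕ) (hr : 1 ≤ r) (ε : ℂ) (hε : IsPrimitiveRoot ε r)
    (k : ℕ) (a : Fin k → ℂ)
    (ha : ∀ i, a i ≠ 0) (hainj : Function.Injective a)
    (lam : Fin k → V) (hlam : ∀ i, lam i ≠ 0)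
    (h : ∀ n : ℤ, ¬ (r : ℤ) ∣ n → ∑ i : Fin k, (a i) ^ n • lam i = 0) :
    ∃ π : Equiv.Perm (Fin k), ∀ i, a (π i) = ε * a i ∧ lam (π i) = lam i := by
  classical
  have hε0 : ε ≠ 0 := hε.ne_zero (by omega)
  set T : Finset ℂ := (Finset.univ.image a) ∪ (Finset.univ.image fun i => ε * a i) with hT
  have hTne : ∀ b ∈ T, b ≠ 0 := by
    intro b hb
    simp only [hT, Finset.mem_union, Finset.mem_image] at hb
    rcases hb with ⟨i, _, rfl⟩ | ⟨i, _, rfl⟩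
    · exact ha i
    · exact mul_ne_zero hε0 (ha i)
  set F : ℂ → V := fun b =>
      (∑ j ∈ Finset.univ.filter fun j => a j = b, lam j)
    - (∑ j ∈ Finset.univ.filter fun j => ε * a j = b, lam j) with hF
  have key : ∀ b ∈ T, F b = 0 := by
    refine vector_exp_indep V T hTne F (fun n => ?_)
    have e1 : ∑ b ∈ T, b ^ n • (∑ j ∈ Finset.univ.filter fun j => a j = b, lam j)
        = ∑ j : Fin k, (a j) ^ n • lam j := by
      rw [← Finset.sum_fiberwise_of_maps_to (g := a) (t := T)
        (fun i _ => by simp [hT]) (fun j => (a j) ^ n • lam j)]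
      refine Finset.sum_congr rfl fun b _ => ?_
      rw [Finset.smul_sum]
      refine Finset.sum_congr rfl fun j hj => ?_
      rw [(Finset.mem_filter.1 hj).2]
    have e2 : ∑ b ∈ T, b ^ n • (∑ j ∈ Finset.univ.filter fun j => ε * a j = b, lam j)
        = ∑ j : Fin k, (ε * a j) ^ n • lam j := by
      rw [← Finset.sum_fiberwise_of_maps_to (g := fun j => ε * a j) (t := T)
        (fun i _ => Finset.mem_union_right _ (Finset.mem_image_of_mem _ (Finset.mem_univ i)))
        (fun j => (ε * a j) ^ n • lam j)]
      refine Finset.sum_congr rfl fun b _ => ?_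
      rw [Finset.smul_sum]
      refine Finset.sum_congr rfl fun j hj => ?_
      rw [(Finset.mem_filter.1 hj).2]
    have e3 : ∑ j : Fin k, (ε * a j) ^ n • lam j = ∑ j : Fin k, (a j) ^ n • lam j := by
      by_cases hd : (r : ℤ) ∣ n
      · obtain ⟨m, rfl⟩ := hd
        refine Finset.sum_congr rfl fun j _ => ?_
        have hεr : ε ^ ((r : ℤ) * m) = 1 := by
          rw [zpow_mul, zpow_natCast, hε.pow_eq_one, one_zpow]
        rw [mul_zpow, hεr, one_mul]
      · rw [h n hd]
        have : ∑ j : Fin k, (ε * a j) ^ n • lam j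
            = ε ^ n • ∑ j : Fin k, (a j) ^ n • lam j := by
          rw [Finset.smul_sum]
          refine Finset.sum_congr rfl fun j _ => ?_
          rw [mul_zpow, smul_smul]
        rw [this, h n hd, smul_zero]
    simp only [hF, smul_sub, Finset.sum_sub_distrib, e1, e2, e3, sub_self]
  -- construct σ
  have hσ : ∀ i : Fin k, ∃ j : Fin k, a j = ε * a i ∧ lam j = lam i := by
    intro i
    have hmem : ε * a i ∈ T :=
      Finset.mem_union_right _ (Finset.mem_image_of_mem _ (Finset.mem_univ i))
    have hFi := key _ hmem
    have hfib2 : (Finset.univ.filter fun j => ε * a j = ε * a i) = {i} := by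
      ext j
      simp only [Finset.mem_filter, Finset.mem_univ, true_and, Finset.mem_singleton]
      constructor
      · intro hj
        exact hainj (mul_left_cancel₀ hε0 hj)
      · rintro rfl; rfl
    rw [hF, sub_eq_zero, hfib2, Finset.sum_singleton] at hFi
    by_cases hne : (Finset.univ.filter fun j => a j = ε * a i).Nonempty
    · obtain ⟨j, hj⟩ := hne
      have haj := (Finset.mem_filter.1 hj).2
      have hsingle : (Finset.univ.filter fun j' => a j' = ε * a i) = {j} := by
        ext j'
        simp only [Finset.mem_filter, Finset.mem_univ, true_and, Finset.mem_singleton]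
        constructor
        · intro hj'
          exact hainj (hj'.trans haj.symm)
        · rintro rfl; exact haj
      rw [hsingle, Finset.sum_singleton] at hFi
      exact ⟨j, haj, hFi⟩
    · rw [Finset.not_nonempty_iff_eq_empty.1 hne, Finset.sum_empty] at hFi
      exact absurd hFi.symm (hlam i)
  choose σ hσ1 hσ2 using hσ
  have hσinj : Function.Injective σ := by
    intro i i' hii
    apply hainj
    have := hσ1 i
    rw [hii, hσ1 i'] at this
    exact hainj (mul_left_cancel₀ hε0 this.symm) ▸ rfl
  have hbij : Function.Bijective σ := (Finite.injective_iff_bijective).1 hσinj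
  exact ⟨Equiv.ofBijective σ hbij, fun i => ⟨hσ1 i, hσ2 i⟩⟩
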